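/- arXiv:1403.3593 — 2 statements merged into one kernel-verified Lean document; each statement's English description precedes it below -/
import Mathlib

section
/- Let X_n, X be real-valued random variables on a probability space. If E[F(X_n)] → E[F(X)] for every continuous, bounded, monotone increasing function F: ℝ → ℝ, then X_n converges to X in distribution. -/
open MeasureTheory Filter Topology Metric

section helpers

variable {Ω : Type*} [MeasurableSpace Ω] {P : Measure Ω} [IsProbabilityMeasure P]

lemma aux_integrable {f : ℝ → ℝ} {C : ℝ} (hf : Continuous f) (hC : ∀ x, |f x| ≤ C)
    {Z : Ω → ℝ} (hZ : Measurable Z) : Integrable (fun ω => f (Z ω)) P := by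
  refine (integrable_const C).mono' ((hf.measurable.comp hZ).aestronglyMeasurable) ?_
  exact Filter.Eventually.of_forall fun ω => by simpa [Real.norm_eq_abs] using hC (Z ω)

noncomputable def ramp (a x : ℝ) : ℝ := max 0 (min 1 (x - a))

lemma ramp_mono (a : ℝ) : Monotone (ramp a) :=
  monotone_const.max (monotone_const.min (fun x y hxy => sub_le_sub_right hxy a))

lemma ramp_cont (a : ℝ) : Continuous (ramp a) :=
  continuous_const.max (continuous_const.min (continuous_id.sub continuous_const))

lemma ramp_nonneg (a x : ℝ) : 0 ≤ ramp a x := le_max_left _ _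

lemma ramp_le_one (a x : ℝ) : ramp a x ≤ 1 := max_le zero_le_one (min_le_left _ _)

lemma ramp_abs_le (a x : ℝ) : |ramp a x| ≤ 1 :=
  abs_le.2 ⟨by linarith [ramp_nonneg a x], ramp_le_one a x⟩

lemma ramp_eq_zero {a x : ℝ} (h : x ≤ a) : ramp a x = 0 :=
  max_eq_left (le_trans (min_le_right _ _) (by linarith))

lemma ramp_eq_one {a x : ℝ} (h : a + 1 ≤ x) : ramp a x = 1 := by
  rw [ramp, min_eq_left (by linarith), max_eq_right zero_le_one]

noncomputable def theta (R x : ℝ) : ℝ := ramp R x + ramp R (-x)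

lemma theta_cont (R : ℝ) : Continuous (theta R) :=
  (ramp_cont R).add ((ramp_cont R).comp continuous_neg)

lemma theta_nonneg (R x : ℝ) : 0 ≤ theta R x := add_nonneg (ramp_nonneg _ _) (ramp_nonneg _ _)

lemma theta_abs_le (R x : ℝ) : |theta R x| ≤ 2 := by
  rw [abs_of_nonneg (theta_nonneg R x)]
  have h1 := ramp_le_one R x; have h2 := ramp_le_one R (-x)
  unfold theta; linarith

lemma theta_eq_zero {R x : ℝ} (h : |x| ≤ R) : theta R x = 0 := by
  obtain ⟨h1, h2⟩ := abs_le.1 h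
  rw [theta, ramp_eq_zero h2, ramp_eq_zero (by linarith), add_zero]

lemma one_le_theta {R x : ℝ} (h : R + 1 ≤ |x|) : 1 ≤ theta R x := by
  rcases abs_cases x with ⟨hx, _⟩ | ⟨hx, _⟩
  · rw [theta, ramp_eq_one (by linarith)]; linarith [ramp_nonneg R (-x)]
  · rw [theta, ramp_eq_one (x := -x) (by linarith)]; linarith [ramp_nonneg R x]

variable {X : ℕ → Ω → ℝ} {Y : Ω → ℝ}

lemma tendsto_theta (hX : ∀ n, Measurable (X n)) (hY : Measurable Y)
    (h : ∀ F : ℝ → ℝ, Continuous F → (∃ C, ∀ x, |F x| ≤ C) → Monotone F →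
      Tendsto (fun n => ∫ ω, F (X n ω) ∂P) atTop (𝓝 (∫ ω, F (Y ω) ∂P))) (R : ℝ) :
    Tendsto (fun n => ∫ ω, theta R (X n ω) ∂P) atTop (𝓝 (∫ ω, theta R (Y ω) ∂P)) := by
  have h1 := h (ramp R) (ramp_cont R) ⟨1, ramp_abs_le R⟩ (ramp_mono R)
  have h2 := h (fun x => -ramp R (-x)) (((ramp_cont R).comp continuous_neg).neg)
    ⟨1, fun x => by simpa using ramp_abs_le R (-x)⟩
    (fun x y hxy => neg_le_neg (ramp_mono R (neg_le_neg hxy)))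
  have h2' : Tendsto (fun n => ∫ ω, ramp R (-(X n ω)) ∂P) atTop
      (𝓝 (∫ ω, ramp R (-(Y ω)) ∂P)) := by
    have := h2.neg
    simpa [integral_neg] using this
  have key := h1.add h2'
  have e1 : ∀ (Z : Ω → ℝ), Measurable Z →
      ∫ ω, theta R (Z ω) ∂P = (∫ ω, ramp R (Z ω) ∂P) + ∫ ω, ramp R (-(Z ω)) ∂P := by
    intro Z hZ
    rw [← integral_add (aux_integrable (ramp_cont R) (ramp_abs_le R) hZ)
      (aux_integrable (f := fun x => ramp R (-x)) ((ramp_cont R).comp continuous_neg)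
        (fun x => ramp_abs_le R (-x)) hZ)]
    rfl
  have := key.congr fun n => (e1 _ (hX n)).symm
  rw [e1 _ hY]
  exact this

lemma tendsto_tail (hY : Measurable Y) :
    Tendsto (fun R : ℕ => ∫ ω, theta R (Y ω) ∂P) atTop (𝓝 0) := by
  have main : Tendsto (fun R : ℕ => ∫ ω, theta R (Y ω) ∂P) atTop (𝓝 (∫ _ω, (0:ℝ) ∂P)) := by
    apply tendsto_integral_of_dominated_convergence (bound := fun _ => (2:ℝ))
    · exact fun R => (aux_integrable (theta_cont R) (theta_abs_le R) hY).aestronglyMeasurable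
    · exact integrable_const 2
    · intro R
      exact Filter.Eventually.of_forall fun ω => by
        simpa [Real.norm_eq_abs] using theta_abs_le R (Y ω)
    · apply Filter.Eventually.of_forall
      intro ω
      obtain ⟨N, hN⟩ := exists_nat_ge (|Y ω|)
      apply Filter.Tendsto.congr' _ tendsto_const_nhds
      filter_upwards [eventually_ge_atTop N] with R hR
      exact (theta_eq_zero (le_trans hN (by exact_mod_cast hR))).symm
  simpa using main

lemma key_lipschitz (hX : ∀ n, Measurable (X n)) (hY : Measurable Y)
    (h : ∀ F : ℝ → ℝ, Continuous F → (∃ C, ∀ x, |F x| ≤ C) → Monotone F →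
      Tendsto (fun n => ∫ ω, F (X n ω) ∂P) atTop (𝓝 (∫ ω, F (Y ω) ∂P)))
    {f : ℝ → ℝ} {C : ℝ} (hC : ∀ x, |f x| ≤ C) {K : NNReal} (hK : LipschitzWith K f) :
    Tendsto (fun n => ∫ ω, f (X n ω) ∂P) atTop (𝓝 (∫ ω, f (Y ω) ∂P)) := by
  have hfc : Continuous f := hK.continuous
  have hC0 : 0 ≤ C := le_trans (abs_nonneg _) (hC 0)
  have hK0 : (0:ℝ) ≤ (K:ℝ) := K.coe_nonneg
  rw [Metric.tendsto_atTop]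
  intro ε hε
  have hε1 : 0 < ε / (6 * C + 2) := by positivity
  set ε1 := ε / (6 * C + 2) with hε1def
  obtain ⟨R, hR⟩ := ((tendsto_tail (P := P) hY).eventually_lt_const hε1).exists
  set R' : ℝ := (R : ℝ) + 1 with hR'def
  have hR0 : (0:ℝ) ≤ (R:ℝ) := Nat.cast_nonneg R
  have hR'0 : (0:ℝ) ≤ R' := by rw [hR'def]; linarith
  set cl : ℝ → ℝ := fun x => max (-R') (min R' x) with hcl
  have cl_mono : Monotone cl := monotone_const.max (monotone_const.min monotone_id)
  have cl_cont : Continuous cl := continuous_const.max (continuous_const.min continuous_id)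
  have cl_abs : ∀ x, |cl x| ≤ R' := fun x =>
    abs_le.2 ⟨le_max_left _ _, max_le (by linarith) (min_le_left _ _)⟩
  set g1 : ℝ → ℝ := fun x => f (cl x) + K * cl x with hg1
  set g2 : ℝ → ℝ := fun x => (K:ℝ) * cl x with hg2
  have g1_mono : Monotone g1 := by
    intro x y hxy
    have huv := cl_mono hxy
    have hd := hK.dist_le_mul (cl x) (cl y)
    rw [Real.dist_eq, Real.dist_eq, abs_of_nonpos (by linarith : cl x - cl y ≤ 0)] at hd
    have h2 := (abs_le.1 hd).2
    simp only [hg1]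
    nlinarith
  have g1_bdd : ∀ x, |g1 x| ≤ C + K * R' := by
    intro x
    have h1 := hC (cl x); have h2 := cl_abs x
    calc |g1 x| ≤ |f (cl x)| + |(K:ℝ) * cl x| := abs_add_le _ _
      _ ≤ C + K * R' := by
          rw [abs_mul, abs_of_nonneg hK0]
          have : (K:ℝ) * |cl x| ≤ K * R' := mul_le_mul_of_nonneg_left h2 hK0
          linarith
  have g2_bdd : ∀ x, |g2 x| ≤ K * R' := by
    intro x
    have h2 := cl_abs x
    simp only [hg2]
    rw [abs_mul, abs_of_nonneg hK0]
    exact mul_le_mul_of_nonneg_left h2 hK0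
  have g2_mono : Monotone g2 := fun x y hxy =>
    mul_le_mul_of_nonneg_left (cl_mono hxy) hK0
  have hh1 := h g1 ((hfc.comp cl_cont).add (continuous_const.mul cl_cont))
    ⟨C + K * R', g1_bdd⟩ g1_mono
  have hh2 := h g2 (continuous_const.mul cl_cont) ⟨K * R', g2_bdd⟩ g2_mono
  have e1 : ∀ (Z : Ω → ℝ), Measurable Z →
      ∫ ω, f (cl (Z ω)) ∂P = (∫ ω, g1 (Z ω) ∂P) - ∫ ω, g2 (Z ω) ∂P := by
    intro Z hZ
    rw [← integral_sub
      (aux_integrable (f := g1) ((hfc.comp cl_cont).add (continuous_const.mul cl_cont)) g1_bdd hZ)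
      (aux_integrable (f := g2) (continuous_const.mul cl_cont) g2_bdd hZ)]
    apply integral_congr_ae
    filter_upwards with ω
    simp only [hg1, hg2]; ring
  have hconv : Tendsto (fun n => ∫ ω, f (cl (X n ω)) ∂P) atTop
      (𝓝 (∫ ω, f (cl (Y ω)) ∂P)) := by
    have := hh1.sub hh2
    rw [e1 _ hY]
    exact this.congr fun n => (e1 _ (hX n)).symm
  have hbd : ∀ (Z : Ω → ℝ), Measurable Z →
      dist (∫ ω, f (Z ω) ∂P) (∫ ω, f (cl (Z ω)) ∂P) ≤ 2 * C * ∫ ω, theta R (Z ω) ∂P := by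
    intro Z hZ
    have hpt : ∀ x, |f x - f (cl x)| ≤ 2 * C * theta R x := by
      intro x
      have hθ0 := theta_nonneg (R:ℝ) x
      rcases le_or_gt x R' with hx | hx
      · rcases le_or_gt (-R') x with hx' | hx'
        · have hclx : cl x = x := by rw [hcl]; simp only; rw [min_eq_right hx, max_eq_right hx']
          rw [hclx, sub_self, abs_zero]
          nlinarith
        · have hθ : 1 ≤ theta R x := one_le_theta (by rw [abs_of_neg (by linarith)]; rw [hR'def] at hx'; linarith)
          have h1 := abs_le.1 (hC x); have h2 := abs_le.1 (hC (cl x))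
          have hb : |f x - f (cl x)| ≤ 2 * C := abs_le.2 ⟨by linarith, by linarith⟩
          nlinarith
      · have hθ : 1 ≤ theta R x := one_le_theta (by rw [abs_of_nonneg (by linarith)]; rw [hR'def] at hx; linarith)
        have h1 := abs_le.1 (hC x); have h2 := abs_le.1 (hC (cl x))
        have hb : |f x - f (cl x)| ≤ 2 * C := abs_le.2 ⟨by linarith, by linarith⟩
        nlinarith
    have hint1 := aux_integrable (P := P) hfc hC hZ
    have hint2 := aux_integrable (P := P) (f := fun x => f (cl x)) (hfc.comp cl_cont) (fun x => hC (cl x)) hZ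
    have hintθ := aux_integrable (P := P) (theta_cont R) (theta_abs_le R) hZ
    rw [Real.dist_eq, ← integral_sub hint1 hint2]
    calc |∫ ω, (f (Z ω) - f (cl (Z ω))) ∂P| ≤ ∫ ω, |f (Z ω) - f (cl (Z ω))| ∂P :=
          by simpa [Real.norm_eq_abs] using
            norm_integral_le_integral_norm (μ := P) (fun ω => f (Z ω) - f (cl (Z ω)))
      _ ≤ ∫ ω, 2 * C * theta R (Z ω) ∂P :=
          integral_mono (hint1.sub hint2).abs (hintθ.const_mul _)
            (fun ω => hpt (Z ω))
      _ = 2 * C * ∫ ω, theta R (Z ω) ∂P := integral_const_mul _ _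
  obtain ⟨N1, hN1⟩ := Metric.tendsto_atTop.mp hconv ε1 hε1
  have E2 := (tendsto_theta hX hY h R).eventually_lt_const hR
  obtain ⟨N2, hN2⟩ := eventually_atTop.mp E2
  refine ⟨max N1 N2, fun n hn => ?_⟩
  have hn1 := hN1 n (le_trans (le_max_left _ _) hn)
  have hn2 := hN2 n (le_trans (le_max_right _ _) hn)
  have d1 := hbd (X n) (hX n)
  have d2 : dist (∫ ω, f (cl (Y ω)) ∂P) (∫ ω, f (Y ω) ∂P) ≤ 2 * C * ∫ ω, theta R (Y ω) ∂P := by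
    rw [dist_comm]; exact hbd Y hY
  have tri := dist_triangle4 (∫ ω, f (X n ω) ∂P) (∫ ω, f (cl (X n ω)) ∂P)
    (∫ ω, f (cl (Y ω)) ∂P) (∫ ω, f (Y ω) ∂P)
  have b1 : 2 * C * (∫ ω, theta R (X n ω) ∂P) ≤ 2 * C * ε1 :=
    mul_le_mul_of_nonneg_left hn2.le (by linarith)
  have b2 : 2 * C * (∫ ω, theta R (Y ω) ∂P) ≤ 2 * C * ε1 :=
    mul_le_mul_of_nonneg_left hR.le (by linarith)
  have hεeq : (6 * C + 2) * ε1 = ε := by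
    rw [hε1def]; field_simp
  have hlt : (4 * C + 1) * ε1 < (6 * C + 2) * ε1 :=
    mul_lt_mul_of_pos_right (by linarith) hε1
  calc dist (∫ ω, f (X n ω) ∂P) (∫ ω, f (Y ω) ∂P)
      ≤ _ + _ + _ := tri
    _ < ε := by nlinarith

lemma stepB (hX : ∀ n, Measurable (X n)) (hY : Measurable Y)
    (h : ∀ F : ℝ → ℝ, Continuous F → (∃ C, ∀ x, |F x| ≤ C) → Monotone F →
      Tendsto (fun n => ∫ ω, F (X n ω) ∂P) atTop (𝓝 (∫ ω, F (Y ω) ∂P)))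
    {U : Set ℝ} (hU : IsOpen U) :
    ((P.map Y) U).toReal ≤ atTop.liminf (fun n => ((P.map (X n)) U).toReal) := by
  by_cases hUu : U = Set.univ
  · subst hUu
    have hm : ∀ n, ((P.map (X n)) Set.univ).toReal = 1 := fun n => by
      haveI := Measure.isProbabilityMeasure_map (μ := P) (hX n).aemeasurable
      simp
    haveI := Measure.isProbabilityMeasure_map (μ := P) hY.aemeasurable
    simp only [hm, measure_univ, ENNReal.toReal_one, liminf_const]
    exact le_refl 1
  · have hne : (Uᶜ : Set ℝ).Nonempty := Set.nonempty_compl.2 hUu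
    set fk : ℕ → ℝ → ℝ := fun k x => min ((k:ℝ) * infDist x Uᶜ) 1 with hfk
    have fk_nonneg : ∀ k x, 0 ≤ fk k x := fun k x =>
      le_min (mul_nonneg (Nat.cast_nonneg k) infDist_nonneg) zero_le_one
    have fk_le_one : ∀ k x, fk k x ≤ 1 := fun k x => min_le_right _ _
    have fk_abs : ∀ (k : ℕ) (x : ℝ), |fk k x| ≤ 1 := fun k x =>
      abs_le.2 ⟨by linarith [fk_nonneg k x], fk_le_one k x⟩
    have fk_lip : ∀ k : ℕ, LipschitzWith k (fk k) := by
      intro k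
      have base : LipschitzWith k (fun x : ℝ => (k:ℝ) * infDist x Uᶜ) := by
        apply LipschitzWith.of_dist_le_mul
        intro x y
        have hd := (lipschitz_infDist_pt (Uᶜ : Set ℝ)).dist_le_mul x y
        rw [Real.dist_eq] at hd
        rw [Real.dist_eq, Real.dist_eq]
        simp only [NNReal.coe_one, one_mul] at hd
        calc |(k:ℝ) * infDist x Uᶜ - (k:ℝ) * infDist y Uᶜ|
            = (k:ℝ) * |infDist x Uᶜ - infDist y Uᶜ| := by
              rw [← mul_sub, abs_mul, abs_of_nonneg (Nat.cast_nonneg k)]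
          _ ≤ (k:ℝ) * |x - y| := mul_le_mul_of_nonneg_left hd (Nat.cast_nonneg k)
          _ = ((k:NNReal):ℝ) * |x - y| := by norm_cast
      exact base.min_const 1
    have fk_tendsto : ∀ k : ℕ, Tendsto (fun n => ∫ ω, fk k (X n ω) ∂P) atTop
        (𝓝 (∫ ω, fk k (Y ω) ∂P)) :=
      fun k => key_lipschitz hX hY h (fk_abs k) (fk_lip k)
    have hub : ∀ (k n : ℕ), ∫ ω, fk k (X n ω) ∂P ≤ ((P.map (X n)) U).toReal := by
      intro k n
      rw [Measure.map_apply (hX n) hU.measurableSet]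
      have hle : ∫ ω, fk k (X n ω) ∂P ≤ ∫ ω, Set.indicator (X n ⁻¹' U) 1 ω ∂P := by
        apply integral_mono (aux_integrable (fk_lip k).continuous (fk_abs k) (hX n))
          ((integrable_const (1:ℝ)).indicator ((hX n) hU.measurableSet))
        intro ω
        by_cases hmem : X n ω ∈ U
        · rw [Set.indicator_of_mem (Set.mem_preimage.2 hmem)]
          exact fk_le_one k _
        · have h0 : infDist (X n ω) Uᶜ = 0 := infDist_zero_of_mem (by simpa using hmem)
          rw [Set.indicator_of_notMem (by simpa using hmem)]
          simp [hfk, h0]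
      calc ∫ ω, fk k (X n ω) ∂P ≤ _ := hle
        _ = (P (X n ⁻¹' U)).toReal := integral_indicator_one ((hX n) hU.measurableSet)
    have hlim : ∀ k : ℕ, ∫ ω, fk k (Y ω) ∂P ≤
        atTop.liminf (fun n => ((P.map (X n)) U).toReal) := by
      intro k
      rw [← (fk_tendsto k).liminf_eq]
      refine liminf_le_liminf (Filter.Eventually.of_forall (hub k))
        ((fk_tendsto k).isBoundedUnder_ge) ?_
      refine IsBoundedUnder.isCoboundedUnder_ge (isBoundedUnder_of ⟨1, fun n => ?_⟩)
      haveI := Measure.isProbabilityMeasure_map (μ := P) (hX n).aemeasurable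
      simpa using ENNReal.toReal_mono ENNReal.one_ne_top (prob_le_one)
    have hdc : Tendsto (fun k => ∫ ω, fk k (Y ω) ∂P) atTop
        (𝓝 (∫ ω, Set.indicator (Y ⁻¹' U) 1 ω ∂P)) := by
      apply tendsto_integral_of_dominated_convergence (bound := fun _ => (1:ℝ))
      · exact fun k => (aux_integrable (fk_lip k).continuous (fk_abs k) hY).aestronglyMeasurable
      · exact integrable_const 1
      · intro k
        exact Filter.Eventually.of_forall fun ω => by
          simpa [Real.norm_eq_abs] using fk_abs k (Y ω)
      · apply Filter.Eventually.of_forall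
        intro ω
        by_cases hmem : Y ω ∈ U
        · have hpos : 0 < infDist (Y ω) Uᶜ :=
            (hU.isClosed_compl.notMem_iff_infDist_pos hne).1 (by simpa using hmem)
          rw [Set.indicator_of_mem (Set.mem_preimage.2 hmem)]
          apply Filter.Tendsto.congr' _ tendsto_const_nhds
          obtain ⟨N, hN⟩ := exists_nat_ge (1 / infDist (Y ω) Uᶜ)
          filter_upwards [eventually_ge_atTop N] with k hk
          have hone : (1:ℝ) ≤ (k:ℝ) * infDist (Y ω) Uᶜ := by
            rw [div_le_iff₀ hpos] at hN
            calc (1:ℝ) ≤ (N:ℝ) * infDist (Y ω) Uᶜ := hN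
              _ ≤ (k:ℝ) * infDist (Y ω) Uᶜ :=
                  mul_le_mul_of_nonneg_right (by exact_mod_cast hk) hpos.le
          simp only [hfk, Pi.one_apply]
          exact (min_eq_right hone).symm
        · rw [Set.indicator_of_notMem (by simpa using hmem)]
          have h0 : infDist (Y ω) Uᶜ = 0 := infDist_zero_of_mem (by simpa using hmem)
          have : ∀ k : ℕ, fk k (Y ω) = 0 := fun k => by simp [hfk, h0]
          simp only [this]
          exact tendsto_const_nhds
    have heq : ((P.map Y) U).toReal = ∫ ω, Set.indicator (Y ⁻¹' U) 1 ω ∂P := by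
      rw [integral_indicator_one (hY hU.measurableSet), Measure.map_apply hY hU.measurableSet]
      rfl
    rw [heq]
    exact le_of_tendsto hdc (Filter.Eventually.of_forall hlim)

end helpers

theorem stmt7 {Ω : Type*} [MeasurableSpace Ω] (P : Measure Ω) [IsProbabilityMeasure P]
    (X : ℕ → Ω → ℝ) (Y : Ω → ℝ)
    (hX : ∀ n, Measurable (X n)) (hY : Measurable Y)
    (h : ∀ F : ℝ → ℝ, Continuous F → (∃ C, ∀ x, |F x| ≤ C) → Monotone F →
      Filter.Tendsto (fun n => ∫ ω, F (X n ω) ∂P) Filter.atTop (nhds (∫ ω, F (Y ω) ∂P))) :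
    ∀ G : ℝ → ℝ, Continuous G → (∃ C, ∀ x, |G x| ≤ C) →
      Filter.Tendsto (fun n => ∫ ω, G (X n ω) ∂P) Filter.atTop (nhds (∫ ω, G (Y ω) ∂P)) := by
  intro G hGc hGb
  obtain ⟨C, hC⟩ := hGb
  have hPM : ∀ n, IsProbabilityMeasure (P.map (X n)) := fun n =>
    Measure.isProbabilityMeasure_map (hX n).aemeasurable
  haveI : IsProbabilityMeasure (P.map Y) := Measure.isProbabilityMeasure_map hY.aemeasurable
  set μs : ℕ → ProbabilityMeasure ℝ := fun n => ⟨P.map (X n), hPM n⟩ with hμs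
  set ν : ProbabilityMeasure ℝ := ⟨P.map Y, inferInstance⟩ with hν
  have weak : Tendsto μs atTop (𝓝 ν) := by
    apply tendsto_of_forall_isOpen_le_liminf
    intro U hU
    have hreal := stepB hX hY h hU
    have hmono : Monotone (fun r : NNReal => (r : ℝ)) := NNReal.coe_mono
    have hmap := hmono.map_liminf_of_continuousAt (F := atTop) (fun n => μs n U)
      NNReal.continuous_coe.continuousAt
      ((isBoundedUnder_of ⟨1, fun n => (μs n).apply_le_one U⟩).isCoboundedUnder_ge)
      (isBoundedUnder_of ⟨0, fun n => zero_le⟩)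
    rw [← NNReal.coe_le_coe, hmap]
    exact hreal
  have hint := ProbabilityMeasure.tendsto_iff_forall_integral_tendsto.mp weak
  set Gb : BoundedContinuousFunction ℝ ℝ :=
    BoundedContinuousFunction.ofNormedAddCommGroup G hGc C
      (fun x => by simpa [Real.norm_eq_abs] using hC x) with hGbdef
  have hG := hint Gb
  have e : ∀ (Z : Ω → ℝ), Measurable Z →
      ∫ x, Gb x ∂(P.map Z) = ∫ ω, G (Z ω) ∂P := by
    intro Z hZ
    rw [show (⇑Gb : ℝ → ℝ) = G from rfl]
    exact integral_map hZ.aemeasurable hGc.aestronglyMeasurable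
  rw [show (∫ ω, G (Y ω) ∂P) = ∫ x, Gb x ∂(ν : Measure ℝ) from (e Y hY).symm]
  exact hG.congr fun n => e (X n) (hX n)
end

section
/- Let 𝒳 be a separable Banach space, X_n, X be 𝒳-valued random variables with X_n ⇒ X (weak convergence), and suppose for every ε > 0 there is a compact K ⊆ 𝒳 with P(X_n ∉ K) ≤ ε for all n. Let F_n, F: 𝒳 → ℝ be continuous with F_n → F uniformly on every compact subset of 𝒳. Then F_n(X_n) ⇒ F(X). -/
open MeasureTheory

theorem stmt8 {Ω : Type*} [MeasurableSpace Ω] (P : Measure Ω) [IsProbabilityMeasure P]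
    {𝒳 : Type*} [NormedAddCommGroup 𝒳] [NormedSpace ℝ 𝒳] [CompleteSpace 𝒳]
    [TopologicalSpace.SeparableSpace 𝒳] [MeasurableSpace 𝒳] [BorelSpace 𝒳]
    (X : ℕ → Ω → 𝒳) (Y : Ω → 𝒳)
    (hX : ∀ n, Measurable (X n)) (hY : Measurable Y)
    (hweak : ∀ G : 𝒳 → ℝ, Continuous G → (∃ C, ∀ x, |G x| ≤ C) →
      Filter.Tendsto (fun n => ∫ ω, G (X n ω) ∂P) Filter.atTop (nhds (∫ ω, G (Y ω) ∂P)))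
    (htight : ∀ ε > (0 : ℝ), ∃ K : Set 𝒳, IsCompact K ∧
      ∀ n, (P {ω | X n ω ∉ K}).toReal ≤ ε)
    (F : ℕ → 𝒳 → ℝ) (Flim : 𝒳 → ℝ)
    (hFn : ∀ n, Continuous (F n)) (hF : Continuous Flim)
    (hconv : ∀ K : Set 𝒳, IsCompact K → TendstoUniformlyOn F Flim Filter.atTop K) :
    ∀ G : ℝ → ℝ, Continuous G → (∃ C, ∀ x, |G x| ≤ C) →
      Filter.Tendsto (fun n => ∫ ω, G (F n (X n ω)) ∂P) Filter.atTop
        (nhds (∫ ω, G (Flim (Y ω)) ∂P)) := by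
  rintro G hG ⟨C, hC⟩
  have hC0 : 0 ≤ C := le_trans (abs_nonneg _) (hC 0)
  -- integrability of all relevant compositions
  have hint : ∀ (n : ℕ) (H : 𝒳 → ℝ), Continuous H →
      Integrable (fun ω => G (H (X n ω))) P := by
    intro n H hH
    refine Integrable.mono' (integrable_const C)
      (((hG.comp hH).measurable.comp (hX n)).aestronglyMeasurable) ?_
    exact Filter.Eventually.of_forall fun ω => by simpa [Real.norm_eq_abs] using hC _
  -- the second term converges by weak convergence
  have hmain : Filter.Tendsto (fun n => ∫ ω, G (Flim (X n ω)) ∂P) Filter.atTop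
      (nhds (∫ ω, G (Flim (Y ω)) ∂P)) :=
    hweak (fun x => G (Flim x)) (hG.comp hF) ⟨C, fun x => hC _⟩
  -- the difference tends to zero
  have hdiff : Filter.Tendsto
      (fun n => (∫ ω, G (F n (X n ω)) ∂P) - ∫ ω, G (Flim (X n ω)) ∂P)
      Filter.atTop (nhds 0) := by
    rw [NormedAddCommGroup.tendsto_nhds_zero]
    intro ε hε
    set δ : ℝ := ε / (8 * (C + 1)) with hδdef
    have hδpos : 0 < δ := by positivity
    obtain ⟨K, hK, hKP⟩ := htight δ hδpos
    -- compact thickening of Flim '' K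
    set K₂ : Set ℝ := Metric.cthickening 1 (Flim '' K) with hK₂def
    have hK₂ : IsCompact K₂ := (hK.image hF).cthickening
    have hGu : UniformContinuousOn G K₂ :=
      hK₂.uniformContinuousOn_of_continuous hG.continuousOn
    rw [Metric.uniformContinuousOn_iff] at hGu
    obtain ⟨δ', hδ'pos, hδ'⟩ := hGu (ε / 2) (by positivity)
    have hU := (Metric.tendstoUniformlyOn_iff.mp (hconv K hK)) (min δ' 1)
      (lt_min hδ'pos one_pos)
    filter_upwards [hU] with n hn
    -- pointwise bound
    set S : Set Ω := {ω | X n ω ∉ K} with hSdef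
    have hSmeas : MeasurableSet S := (hX n) hK.isClosed.measurableSet.compl
    have hbound : ∀ ω, ‖G (F n (X n ω)) - G (Flim (X n ω))‖ ≤
        ε / 2 + S.indicator (fun _ => 2 * C) ω := by
      intro ω
      by_cases hω : X n ω ∈ K
      · have hS0 : S.indicator (fun _ => 2 * C) ω = 0 :=
          Set.indicator_of_notMem (by simp [hSdef, hω]) _
        rw [hS0, add_zero]
        have hdist := hn (X n ω) hω
        have hFlimmem : Flim (X n ω) ∈ K₂ :=
          Metric.self_subset_cthickening _ (Set.mem_image_of_mem _ hω)
        have hFnmem : F n (X n ω) ∈ K₂ := by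
          apply Metric.mem_cthickening_of_dist_le _ (Flim (X n ω)) 1 _
            (Set.mem_image_of_mem _ hω)
          rw [dist_comm]
          exact le_trans hdist.le (min_le_right _ _)
        have hlt : dist (F n (X n ω)) (Flim (X n ω)) < δ' := by
          rw [dist_comm]; exact hdist.trans_le (min_le_left _ _)
        have hfin := hδ' (F n (X n ω)) hFnmem (Flim (X n ω)) hFlimmem hlt
        rw [Real.dist_eq] at hfin
        rw [Real.norm_eq_abs]
        exact hfin.le
      · have hS1 : S.indicator (fun _ => 2 * C) ω = 2 * C :=
          Set.indicator_of_mem (by simp [hSdef, hω]) _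
        rw [hS1, Real.norm_eq_abs]
        have h1 := hC (F n (X n ω))
        have h2 := hC (Flim (X n ω))
        have := abs_sub (G (F n (X n ω))) (G (Flim (X n ω)))
        nlinarith [abs_sub_abs_le_abs_sub (G (F n (X n ω))) (G (Flim (X n ω)))]
    have hInt1 := hint n (F n) (hFn n)
    have hInt2 := hint n Flim hF
    have hPS : (P S).toReal ≤ δ := by rw [hSdef]; exact hKP n
    calc ‖(∫ ω, G (F n (X n ω)) ∂P) - ∫ ω, G (Flim (X n ω)) ∂P‖
        = ‖∫ ω, (G (F n (X n ω)) - G (Flim (X n ω))) ∂P‖ := by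
          rw [integral_sub hInt1 hInt2]
      _ ≤ ∫ ω, ‖G (F n (X n ω)) - G (Flim (X n ω))‖ ∂P := norm_integral_le_integral_norm _
      _ ≤ ∫ ω, (ε / 2 + S.indicator (fun _ => 2 * C) ω) ∂P :=
          integral_mono (hInt1.sub hInt2).norm
            ((integrable_const _).add ((integrable_const _).indicator hSmeas))
            hbound
      _ = ε / 2 + (P S).toReal * (2 * C) := by
          rw [integral_add (integrable_const _) ((integrable_const _).indicator hSmeas),
            integral_const, integral_indicator_const _ hSmeas]
          simp [smul_eq_mul, Measure.real]
      _ < ε := by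
          have hδeq : δ * (8 * (C + 1)) = ε := by
            rw [hδdef]; field_simp
          nlinarith [mul_le_mul_of_nonneg_right hPS (by positivity : (0:ℝ) ≤ 2 * C),
            ENNReal.toReal_nonneg (a := P S), hC0, hε]
  have := hdiff.add hmain
  simpa using this
end
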